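/- Let m ≥ 1 and k ≥ 2 be integers, let v : Finset (Fin m) → ℝ be any set function, and regard G_k^v as a polynomial function of x : Fin m → ℝ. Then for every x : Fin m → ℝ and all i, j : Fin m, the second-order partial derivative ∂²G_k^v/∂x_i∂x_j at x equals ((k−1)/k) · ∑_{S : Finset (Fin m)} (−1)^{|S|} · ∑_{R ⊆ S} (−1)^{|R|} · (1 − (∑_{j' ∉ R} x j')/k)^{k−2} · H^v_S(i,j). -/

import Mathlib

open Finset

/-- Per-draw weights: project `j` is drawn with probability `x j / k`, and
`none` (no project) with the remaining probability `1 - (∑ j, x j)/k`. -/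
noncomputable def lotW {m : ℕ} (k : ℕ) (x : Fin m → ℝ) : Option (Fin m) → ℝ
  | some j => x j / k
  | none => 1 - (∑ j, x j) / k

/-- Probability of a particular draw function `f : Fin t → Option (Fin m)`,
with per-draw weights determined by `k` and `x`. -/
noncomputable def lotP {m : ℕ} (k t : ℕ) (x : Fin m → ℝ)
    (f : Fin t → Option (Fin m)) : ℝ :=
  ∏ s, lotW k x (f s)

/-- The set of projects chosen by a draw function `f`. -/
def lotProj {m t : ℕ} (f : Fin t → Option (Fin m)) : Finset (Fin m) :=
  Finset.univ.filter (fun j => ∃ s, f s = some j)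


/-- Expected value of the set function `v` under the `k`-bounded-lottery
rounding scheme `r_k` applied to `x`. -/
noncomputable def lotG {m : ℕ} (k : ℕ) (v : Finset (Fin m) → ℝ)
    (x : Fin m → ℝ) : ℝ :=
  ∑ f : Fin k → Option (Fin m), lotP k k x f * v (lotProj f)

/-- Partial derivative of `F : (Fin m → ℝ) → ℝ` with respect to coordinate `j`,
taken via `deriv` along coordinate updates. -/
noncomputable def pd {m : ℕ} (j : Fin m) (F : (Fin m → ℝ) → ℝ)
    (x : Fin m → ℝ) : ℝ :=
  deriv (fun t => F (Function.update x j t)) (x j)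

/-- The discrete Hessian matrix of the set function `v` at the set `S`. -/
def dHess {m : ℕ} (v : Finset (Fin m) → ℝ) (S : Finset (Fin m)) (i j : Fin m) : ℝ :=
  v (S ∪ {i, j}) - v (S ∪ {i}) - v (S ∪ {j}) + v S

/-! ### Auxiliary material -/

noncomputable def EE {m : ℕ} (k n : ℕ) (R : Finset (Fin m)) (x : Fin m → ℝ) : ℝ :=
  (1 - (∑ j' ∈ Rᶜ, x j') / k) ^ n

lemma union_single {m : ℕ} (s : Finset (Fin m)) (a : Fin m) : s ∪ {a} = insert a s := by
  rw [Finset.union_comm, ← Finset.insert_eq]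

/-- Cancellation lemma by the involution `S ↦ S Δ {a}`. -/
lemma canc {m : ℕ} {R : Finset (Fin m)} {a : Fin m} (ha : a ∉ R)
    (w : Finset (Fin m) → ℝ) :
    ∑ S ∈ univ.filter (fun S => R ⊆ S), (-1 : ℝ) ^ S.card * w (S ∪ {a}) = 0 := by
  have h₁ : ∀ (S : Finset (Fin m)), S ∈ univ.filter (fun S => R ⊆ S) →
      (-1 : ℝ) ^ S.card * w (S ∪ {a}) +
        (-1 : ℝ) ^ (if a ∈ S then S.erase a else insert a S).card *
          w ((if a ∈ S then S.erase a else insert a S) ∪ {a}) = 0 := by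
    intro S _
    by_cases h : a ∈ S
    · simp only [h, if_true]
      rw [union_single, union_single, Finset.insert_erase h, Finset.insert_eq_self.mpr h,
        ← Finset.card_erase_add_one h]
      ring
    · simp only [h, if_false]
      rw [union_single, union_single, Finset.insert_idem, Finset.card_insert_of_notMem h]
      ring
  have hmem : ∀ (S : Finset (Fin m)), S ∈ univ.filter (fun S => R ⊆ S) →
      (if a ∈ S then S.erase a else insert a S) ∈ univ.filter (fun S => R ⊆ S) := by
    intro S hS
    simp only [Finset.mem_filter, Finset.mem_univ, true_and] at hS ⊢
    by_cases h : a ∈ S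
    · simpa [h] using Finset.subset_erase.mpr ⟨hS, ha⟩
    · simpa [h] using hS.trans (Finset.subset_insert a S)
  refine Finset.sum_involution (fun S _ => if a ∈ S then S.erase a else insert a S)
    h₁ ?_ hmem ?_
  · intro S _ _
    by_cases h : a ∈ S
    · simp only [h, if_true]
      intro he; exact (Finset.erase_eq_self.mp he) h
    · simp only [h, if_false]
      intro he; exact h (Finset.insert_eq_self.mp he)
  · intro S _
    by_cases h : a ∈ S
    · simp [h, Finset.insert_erase h]
    · simp [h, Finset.erase_insert h]

lemma hessSum {m : ℕ} (v : Finset (Fin m) → ℝ) (R : Finset (Fin m)) (i j : Fin m) :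
    ∑ S ∈ univ.filter (fun S => R ⊆ S), (-1 : ℝ) ^ S.card * dHess v S i j
      = if i ∈ R ∨ j ∈ R then 0
        else ∑ S ∈ univ.filter (fun S => R ⊆ S), (-1 : ℝ) ^ S.card * v S := by
  by_cases hi : i ∈ R
  · rw [if_pos (Or.inl hi)]
    apply Finset.sum_eq_zero
    intro S hS
    simp only [Finset.mem_filter, Finset.mem_univ, true_and] at hS
    have hiS : i ∈ S := hS hi
    have h1 : S ∪ {i} = S := Finset.union_eq_left.mpr (Finset.singleton_subset_iff.mpr hiS)
    have h2 : S ∪ {i, j} = S ∪ {j} := by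
      rw [show ({i, j} : Finset (Fin m)) = {i} ∪ {j} from rfl, ← Finset.union_assoc, h1]
    simp [dHess, h1, h2]
  · by_cases hj : j ∈ R
    · rw [if_pos (Or.inr hj)]
      apply Finset.sum_eq_zero
      intro S hS
      simp only [Finset.mem_filter, Finset.mem_univ, true_and] at hS
      have hjS : j ∈ S := hS hj
      have h1 : S ∪ {j} = S := Finset.union_eq_left.mpr (Finset.singleton_subset_iff.mpr hjS)
      have h2 : S ∪ {i, j} = S ∪ {i} := by
        rw [show ({i, j} : Finset (Fin m)) = {i} ∪ {j} from rfl, ← Finset.union_assoc]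
        exact Finset.union_eq_left.mpr (Finset.singleton_subset_iff.mpr
          (Finset.mem_union_left _ hjS))
      simp [dHess, h1, h2]
    · rw [if_neg (by tauto)]
      have e1 := canc hi (fun T => v (T ∪ {j}))
      have e2 := canc hi v
      have e3 := canc hj v
      have key : ∀ S : Finset (Fin m), (-1:ℝ) ^ S.card * dHess v S i j
          = (-1:ℝ)^S.card * v ((S ∪ {i}) ∪ {j}) - (-1:ℝ)^S.card * v (S ∪ {i})
            - (-1:ℝ)^S.card * v (S ∪ {j}) + (-1:ℝ)^S.card * v S := by
        intro S
        have : S ∪ {i, j} = (S ∪ {i}) ∪ {j} := by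
          rw [show ({i, j} : Finset (Fin m)) = {i} ∪ {j} from rfl, ← Finset.union_assoc]
        rw [dHess, this]; ring
      calc ∑ S ∈ univ.filter (fun S => R ⊆ S), (-1 : ℝ) ^ S.card * dHess v S i j
          = (∑ S ∈ univ.filter (fun S => R ⊆ S), (-1:ℝ)^S.card * v ((S ∪ {i}) ∪ {j}))
            - (∑ S ∈ univ.filter (fun S => R ⊆ S), (-1:ℝ)^S.card * v (S ∪ {i}))
            - (∑ S ∈ univ.filter (fun S => R ⊆ S), (-1:ℝ)^S.card * v (S ∪ {j}))
            + (∑ S ∈ univ.filter (fun S => R ⊆ S), (-1:ℝ)^S.card * v S) := by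
            rw [← Finset.sum_sub_distrib, ← Finset.sum_sub_distrib, ← Finset.sum_add_distrib]
            exact Finset.sum_congr rfl fun S _ => key S
        _ = ∑ S ∈ univ.filter (fun S => R ⊆ S), (-1:ℝ)^S.card * v S := by
            rw [e1, e2, e3]; ring

lemma lemC {m : ℕ} (v : Finset (Fin m) → ℝ) (c : Finset (Fin m) → ℝ) (i j : Fin m) :
    ∑ S : Finset (Fin m), ∑ R ∈ S.powerset,
        ((-1:ℝ)^(S.card+R.card) * v S) * (if i ∈ R ∨ j ∈ R then 0 else c R)
      = ∑ S : Finset (Fin m), (-1:ℝ)^S.card *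
          ∑ R ∈ S.powerset, (-1:ℝ)^R.card * c R * dHess v S i j := by
  have hcomm : ∀ (S : Finset (Fin m)) (R : Finset (Fin m)),
      S ∈ (univ : Finset (Finset (Fin m))) ∧ R ∈ S.powerset ↔
      S ∈ univ.filter (fun S => R ⊆ S) ∧ R ∈ (univ : Finset (Finset (Fin m))) := by
    intro S R
    simp [Finset.mem_powerset]
  have hmul : ∀ S : Finset (Fin m), (-1:ℝ)^S.card *
      (∑ R ∈ S.powerset, (-1:ℝ)^R.card * c R * dHess v S i j)
    = ∑ R ∈ S.powerset, (-1:ℝ)^S.card * ((-1:ℝ)^R.card * c R * dHess v S i j) :=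
    fun S => Finset.mul_sum _ _ _
  simp only [hmul]
  rw [Finset.sum_comm' hcomm, Finset.sum_comm' hcomm]
  apply Finset.sum_congr rfl
  intro R _
  have key := hessSum v R i j
  by_cases h : i ∈ R ∨ j ∈ R
  · rw [if_pos h] at key
    calc ∑ S ∈ univ.filter (fun S => R ⊆ S),
          ((-1:ℝ)^(S.card+R.card) * v S) * (if i ∈ R ∨ j ∈ R then 0 else c R)
        = 0 := by simp [h]
      _ = ∑ S ∈ univ.filter (fun S => R ⊆ S),
            (-1:ℝ)^S.card * ((-1:ℝ)^R.card * c R * dHess v S i j) := by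
          have : ∑ S ∈ univ.filter (fun S => R ⊆ S),
              (-1:ℝ)^S.card * ((-1:ℝ)^R.card * c R * dHess v S i j)
            = ((-1:ℝ)^R.card * c R) *
                ∑ S ∈ univ.filter (fun S => R ⊆ S), (-1:ℝ)^S.card * dHess v S i j := by
            rw [Finset.mul_sum]; exact Finset.sum_congr rfl fun S _ => by ring
          rw [this, key, mul_zero]
  · rw [if_neg h] at key
    calc ∑ S ∈ univ.filter (fun S => R ⊆ S),
          ((-1:ℝ)^(S.card+R.card) * v S) * (if i ∈ R ∨ j ∈ R then 0 else c R)
        = ((-1:ℝ)^R.card * c R) *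
            ∑ S ∈ univ.filter (fun S => R ⊆ S), (-1:ℝ)^S.card * v S := by
          rw [Finset.mul_sum]
          exact Finset.sum_congr rfl fun S _ => by
            rw [if_neg h, pow_add]; ring
      _ = ((-1:ℝ)^R.card * c R) *
            ∑ S ∈ univ.filter (fun S => R ⊆ S), (-1:ℝ)^S.card * dHess v S i j := by
          rw [key]
      _ = ∑ S ∈ univ.filter (fun S => R ⊆ S),
            (-1:ℝ)^S.card * ((-1:ℝ)^R.card * c R * dHess v S i j) := by
          rw [Finset.mul_sum]; exact Finset.sum_congr rfl fun S _ => by ring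

lemma powR {α : Type*} [DecidableEq α] (s : Finset α) :
    ∑ R ∈ s.powerset, (-1:ℝ)^R.card = if s = ∅ then 1 else 0 := by
  have h := congrArg (Int.cast : ℤ → ℝ) (Finset.sum_powerset_neg_one_pow_card (x := s))
  push_cast at h
  simpa using h

lemma innerSum {m : ℕ} (A S : Finset (Fin m)) :
    ∑ R ∈ S.powerset.filter (fun R => A ⊆ R), (-1:ℝ)^R.card
      = if S = A then (-1:ℝ)^A.card else 0 := by
  by_cases hAS : A ⊆ S
  · have hb : ∑ R ∈ S.powerset.filter (fun R => A ⊆ R), (-1:ℝ)^R.card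
        = ∑ T ∈ (S \ A).powerset, (-1:ℝ)^(A.card + T.card) := by
      refine Finset.sum_bij' (fun R _ => R \ A) (fun T _ => A ∪ T) ?_ ?_ ?_ ?_ ?_
      · intro R hR
        simp only [Finset.mem_filter, Finset.mem_powerset] at hR
        exact Finset.mem_powerset.mpr (Finset.sdiff_subset_sdiff hR.1 Finset.Subset.rfl)
      · intro T hT
        simp only [Finset.mem_powerset] at hT
        simp only [Finset.mem_filter, Finset.mem_powerset]
        exact ⟨Finset.union_subset hAS (hT.trans Finset.sdiff_subset), Finset.subset_union_left⟩
      · intro R hR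
        simp only [Finset.mem_filter, Finset.mem_powerset] at hR
        exact Finset.union_sdiff_of_subset hR.2
      · intro T hT
        simp only [Finset.mem_powerset] at hT
        have hd : Disjoint A T :=
          Finset.disjoint_left.mpr fun a haA haT => (Finset.mem_sdiff.mp (hT haT)).2 haA
        try simp only []
        rw [Finset.union_sdiff_cancel_left hd]
      · intro R hR
        simp only [Finset.mem_filter, Finset.mem_powerset] at hR
        have : A.card + (R \ A).card = R.card := by
          rw [add_comm, Finset.card_sdiff_add_card_eq_card hR.2]
        rw [← this]
    rw [hb]
    have : ∑ T ∈ (S \ A).powerset, (-1:ℝ)^(A.card + T.card)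
        = (-1:ℝ)^A.card * ∑ T ∈ (S \ A).powerset, (-1:ℝ)^T.card := by
      rw [Finset.mul_sum]
      exact Finset.sum_congr rfl fun T _ => pow_add _ _ _
    rw [this, powR]
    have hiff : S \ A = ∅ ↔ S = A := by
      rw [Finset.sdiff_eq_empty_iff_subset]
      exact ⟨fun h => Finset.Subset.antisymm h hAS, fun h => h ▸ Finset.Subset.rfl⟩
    by_cases he : S = A
    · rw [if_pos (hiff.mpr he), if_pos he, mul_one]
    · rw [if_neg (fun h => he (hiff.mp h)), if_neg he, mul_zero]
  · have hempty : S.powerset.filter (fun R => A ⊆ R) = ∅ := by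
      apply Finset.filter_false_of_mem
      intro R hR hAR
      exact hAS (hAR.trans (Finset.mem_powerset.mp hR))
    rw [hempty, Finset.sum_empty, if_neg (fun (h : S = A) => hAS (h ▸ Finset.Subset.rfl))]

lemma lemB {m : ℕ} (v : Finset (Fin m) → ℝ) (A : Finset (Fin m)) (P : ℝ) :
    ∑ S : Finset (Fin m), ∑ R ∈ S.powerset,
        ((-1:ℝ)^(S.card+R.card) * v S) * (if A ⊆ R then P else 0)
      = P * v A := by
  have hS : ∀ S : Finset (Fin m),
      ∑ R ∈ S.powerset, ((-1:ℝ)^(S.card+R.card) * v S) * (if A ⊆ R then P else 0)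
        = if S = A then P * v A else 0 := by
    intro S
    have : ∑ R ∈ S.powerset, ((-1:ℝ)^(S.card+R.card) * v S) * (if A ⊆ R then P else 0)
        = ((-1:ℝ)^S.card * v S * P) *
            ∑ R ∈ S.powerset.filter (fun R => A ⊆ R), (-1:ℝ)^R.card := by
      rw [Finset.sum_filter, Finset.mul_sum]
      refine Finset.sum_congr rfl fun R _ => ?_
      by_cases h : A ⊆ R
      · rw [if_pos h, if_pos h, pow_add]; ring
      · rw [if_neg h, if_neg h]; ring
    rw [this, innerSum]
    by_cases he : S = A
    · subst he
      rw [if_pos rfl, if_pos rfl]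
      have h1 : (-1:ℝ)^S.card * (-1:ℝ)^S.card = 1 := by
        rw [← pow_add, ← two_mul, pow_mul]; norm_num
      calc (-1:ℝ)^S.card * v S * P * (-1:ℝ)^S.card
          = ((-1:ℝ)^S.card * (-1:ℝ)^S.card) * (v S * P) := by ring
        _ = P * v S := by rw [h1]; ring
    · rw [if_neg he, if_neg he, mul_zero]
  rw [Finset.sum_congr rfl fun S _ => hS S, Finset.sum_ite_eq' univ A (fun _ => P * v A),
    if_pos (Finset.mem_univ A)]

lemma qlem {m : ℕ} (k : ℕ) (R : Finset (Fin m)) (x : Fin m → ℝ) :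
    EE k k R x
      = ∑ f : Fin k → Option (Fin m), (if lotProj f ⊆ R then lotP k k x f else 0) := by
  have hw : (1 - (∑ j' ∈ Rᶜ, x j') / (k:ℝ))
      = ∑ o ∈ insert none (R.image some), lotW k x o := by
    rw [Finset.sum_insert (by simp)]
    rw [Finset.sum_image (fun a _ b _ h => Option.some.inj h)]
    have hsplit := Finset.sum_compl_add_sum R x
    simp only [lotW]
    rw [← hsplit, ← Finset.sum_div]
    ring
  have hiff : ∀ f : Fin k → Option (Fin m), (lotProj f ⊆ R ↔
      f ∈ Fintype.piFinset (fun _ : Fin k => insert none (R.image some))) := by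
    intro f
    rw [Fintype.mem_piFinset]
    constructor
    · intro h s
      cases hfs : f s with
      | none => exact Finset.mem_insert_self _ _
      | some j =>
        have hj : j ∈ lotProj f := by
          simp only [lotProj, Finset.mem_filter, Finset.mem_univ, true_and]
          exact ⟨s, hfs⟩
        exact Finset.mem_insert_of_mem (Finset.mem_image_of_mem some (h hj))
    · intro h jj hjj
      simp only [lotProj, Finset.mem_filter, Finset.mem_univ, true_and] at hjj
      obtain ⟨s, hs⟩ := hjj
      have hfs := h s
      rw [hs] at hfs
      rcases Finset.mem_insert.mp hfs with h1 | h1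
      · exact absurd h1 (by simp)
      · obtain ⟨b, hb, he⟩ := Finset.mem_image.mp h1
        obtain rfl : b = jj := Option.some.inj he
        exact hb
  calc EE k k R x = (∑ o ∈ insert none (R.image some), lotW k x o) ^ k := by
        rw [EE, hw]
    _ = ∏ _s : Fin k, ∑ o ∈ insert none (R.image some), lotW k x o := by
        rw [Finset.prod_const, Finset.card_univ, Fintype.card_fin]
    _ = ∑ f ∈ Fintype.piFinset (fun _ : Fin k => insert none (R.image some)),
          ∏ s, lotW k x (f s) := Finset.prod_univ_sum _ _
    _ = ∑ f ∈ univ ∩ Fintype.piFinset (fun _ : Fin k => insert none (R.image some)),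
          lotP k k x f := by rw [Finset.univ_inter]; rfl
    _ = ∑ f : Fin k → Option (Fin m),
          (if f ∈ Fintype.piFinset (fun _ : Fin k => insert none (R.image some))
            then lotP k k x f else 0) := (Finset.sum_ite_mem _ _ _).symm
    _ = ∑ f : Fin k → Option (Fin m), (if lotProj f ⊆ R then lotP k k x f else 0) := by
        refine Finset.sum_congr rfl fun f _ => ?_
        rw [if_congr (hiff f).symm rfl rfl]

lemma lemA {m : ℕ} (k : ℕ) (v : Finset (Fin m) → ℝ) (x : Fin m → ℝ) :
    lotG k v x = ∑ S : Finset (Fin m), ∑ R ∈ S.powerset,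
      ((-1:ℝ)^(S.card+R.card) * v S) * EE k k R x := by
  have step1 : ∑ S : Finset (Fin m), ∑ R ∈ S.powerset,
      ((-1:ℝ)^(S.card+R.card) * v S) * EE k k R x
    = ∑ f : Fin k → Option (Fin m), ∑ S : Finset (Fin m), ∑ R ∈ S.powerset,
        ((-1:ℝ)^(S.card+R.card) * v S) * (if lotProj f ⊆ R then lotP k k x f else 0) := by
    rw [Finset.sum_comm]
    refine Finset.sum_congr rfl fun S _ => ?_
    rw [Finset.sum_comm]
    refine Finset.sum_congr rfl fun R _ => ?_
    rw [qlem, Finset.mul_sum]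
  rw [step1]
  exact Eq.symm (Finset.sum_congr rfl fun f _ => lemB v (lotProj f) (lotP k k x f))

lemma hasDerivAt_EE {m : ℕ} (k n : ℕ) (R : Finset (Fin m)) (x : Fin m → ℝ) (j : Fin m) :
    HasDerivAt (fun t => EE k (n+1) R (Function.update x j t))
      (if j ∈ R then 0 else -(((n:ℝ)+1) / k) * EE k n R x) (x j) := by
  by_cases hj : j ∈ R
  · rw [if_pos hj]
    have hconst : ∀ t, EE k (n+1) R (Function.update x j t) = EE k (n+1) R x := by
      intro t
      unfold EE
      congr 3
      refine Finset.sum_congr rfl fun a ha => ?_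
      exact Function.update_of_ne (fun (h : a = j) => (Finset.mem_compl.mp ha) (h ▸ hj)) _ _
    simp only [hconst]
    exact hasDerivAt_const _ _
  · rw [if_neg hj]
    have hjc : j ∈ Rᶜ := Finset.mem_compl.mpr hj
    have hsum : ∀ t : ℝ, ∑ j' ∈ Rᶜ, Function.update x j t j' = t + ∑ j' ∈ Rᶜ \ {j}, x j' :=
      fun t => Finset.sum_update_of_mem hjc x t
    set c : ℝ := ∑ j' ∈ Rᶜ \ {j}, x j' with hc
    have hval : x j + c = ∑ j' ∈ Rᶜ, x j' := by
      rw [hc, ← Finset.erase_eq]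
      exact Finset.add_sum_erase _ _ hjc
    have hfun : (fun t => EE k (n+1) R (Function.update x j t))
        = fun t : ℝ => (1 - (t + c)/k)^(n+1) := by
      funext t
      rw [EE, hsum t]
    rw [hfun]
    have hinner : HasDerivAt (fun t : ℝ => 1 - (t + c)/k) (-(1/k)) (x j) := by
      have h1 : HasDerivAt (fun t : ℝ => (t + c)/k) (1/(k:ℝ)) (x j) := by
        simpa using ((hasDerivAt_id (x j)).add_const c).div_const (k:ℝ)
      exact h1.const_sub 1
    have h2 := hinner.pow (n+1)
    have h3 : (1 : ℝ) - (x j + c)/k = 1 - (∑ j' ∈ Rᶜ, x j')/k := by rw [hval]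
    simp only [Nat.add_sub_cancel] at h2
    convert h2 using 1
    any_goals rfl
    rw [EE, h3]
    push_cast
    ring

lemma hasDerivAt_Phi {m : ℕ} (k n : ℕ) (c : Finset (Fin m) → Finset (Fin m) → ℝ)
    (j : Fin m) (x : Fin m → ℝ) :
    HasDerivAt (fun t => ∑ S : Finset (Fin m), ∑ R ∈ S.powerset,
        c S R * EE k (n+1) R (Function.update x j t))
      (∑ S : Finset (Fin m), ∑ R ∈ S.powerset,
        c S R * (if j ∈ R then 0 else -(((n:ℝ)+1)/k) * EE k n R x)) (x j) := by
  refine HasDerivAt.fun_sum fun S _ => HasDerivAt.fun_sum fun R _ => ?_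
  exact (hasDerivAt_EE k n R x j).const_mul (c S R)

theorem stmt10 (m k : ℕ) (hm : 1 ≤ m) (hk : 2 ≤ k) (v : Finset (Fin m) → ℝ)
    (x : Fin m → ℝ) (i j : Fin m) :
    pd i (pd j (lotG k v)) x
      = ((k : ℝ) - 1) / k *
          ∑ S : Finset (Fin m), (-1 : ℝ) ^ S.card *
            ∑ R ∈ S.powerset,
              (-1 : ℝ) ^ R.card * (1 - (∑ j' ∈ Rᶜ, x j') / k) ^ (k - 2) *
                dHess v S i j := by
  obtain ⟨d, rfl⟩ : ∃ d, k = d + 2 := ⟨k - 2, by omega⟩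
  have hK : ((d:ℝ) + 2) ≠ 0 := by positivity
  have hKcast : ((d + 2 : ℕ) : ℝ) = (d : ℝ) + 2 := by push_cast; ring
  set K := d + 2 with hKdef
  set c0 : Finset (Fin m) → Finset (Fin m) → ℝ :=
    fun S R => (-1:ℝ)^(S.card+R.card) * v S with hc0
  set c1 : Finset (Fin m) → Finset (Fin m) → ℝ :=
    fun S R => c0 S R * (if j ∈ R then 0 else -((((d+1:ℕ)):ℝ)+1)/K) with hc1
  -- Step 1: closed form for lotG
  have hG : lotG K v = fun y => ∑ S : Finset (Fin m), ∑ R ∈ S.powerset,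
      c0 S R * EE K ((d+1)+1) R y := by
    funext y
    have : (d+1)+1 = K := rfl
    rw [this]
    exact lemA K v y
  -- Step 2: first partial derivative
  have hpdj : pd j (lotG K v) = fun y => ∑ S : Finset (Fin m), ∑ R ∈ S.powerset,
      c1 S R * EE K (d+1) R y := by
    funext y
    have h := hasDerivAt_Phi (m := m) K (d+1) c0 j y
    have h0 : pd j (lotG K v) y = ∑ S : Finset (Fin m), ∑ R ∈ S.powerset,
        c0 S R * (if j ∈ R then 0 else -((((d+1:ℕ)):ℝ)+1)/K * EE K (d+1) R y) := by
      rw [pd]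
      simp only [hG]
      have := h.deriv
      rw [this]
      refine Finset.sum_congr rfl fun S _ => Finset.sum_congr rfl fun R _ => ?_
      by_cases hjR : j ∈ R
      · rw [if_pos hjR, if_pos hjR]
      · rw [if_neg hjR, if_neg hjR]; ring
    rw [h0]
    refine Finset.sum_congr rfl fun S _ => Finset.sum_congr rfl fun R _ => ?_
    simp only [hc1]
    by_cases hjR : j ∈ R
    · simp [hjR]
    · simp only [hjR, if_false]; ring
  -- Step 3: second partial derivative
  have h2 := hasDerivAt_Phi (m := m) K d c1 i x
  have hLHS : pd i (pd j (lotG K v)) x = ∑ S : Finset (Fin m), ∑ R ∈ S.powerset,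
      c1 S R * (if i ∈ R then 0 else -(((d:ℝ)+1)/K) * EE K d R x) := by
    rw [hpdj, pd]
    exact h2.deriv
  rw [hLHS]
  -- Step 4: final combinatorial identity
  have hEE : ∀ R : Finset (Fin m),
      (1 - (∑ j' ∈ Rᶜ, x j') / (K:ℝ)) ^ (K - 2) = EE K d R x := by
    intro R
    rw [EE, show K - 2 = d from by omega]
  simp only [hEE]
  rw [← lemC v (fun R => EE K d R x) i j]
  rw [Finset.mul_sum]
  refine Finset.sum_congr rfl fun S _ => ?_
  rw [Finset.mul_sum]
  refine Finset.sum_congr rfl fun R _ => ?_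
  simp only [hc1, hc0]
  by_cases hiR : i ∈ R
  · simp [hiR]
  · by_cases hjR : j ∈ R
    · simp [hjR]
    · rw [if_neg hjR, if_neg hiR, if_neg (by tauto : ¬(i ∈ R ∨ j ∈ R))]
      have hcast : (((d+1:ℕ)):ℝ) = (d:ℝ) + 1 := by push_cast; ring
      rw [hcast, hKcast]
      field_simp
      ring
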